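/- Let q ≥ 2 and r = q^l with l ≥ 1. For any m ≥ 1, |Cyc_{qr}(mqr)| ≥ (mq)^{r-1} · |Cyc_{q,r}(mqr)|. -/

import Mathlib

/-- Membership in `Cyc_{q,r}(n)`: every cycle length is a multiple of `q` and
each cycle length occurs a multiple of `r` times. -/
def CycQR (q r : ℕ) {α : Type*} [Fintype α] [DecidableEq α] (σ : Equiv.Perm α) : Prop :=
  (∀ x, q ∣ Function.minimalPeriod ⇑σ x) ∧
    ∀ i : ℕ, r ∣ Multiset.count i σ.cycleType

open Equiv Function Finset

namespace Stmt15

variable {ℓ r : ℕ}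

def rho (ℓ r : ℕ) : Equiv.Perm (ZMod ℓ × ZMod r) where
  toFun p := (p.1 + 1, p.2)
  invFun p := (p.1 - 1, p.2)
  left_inv p := by simp
  right_inv p := by simp

def sigU (u : ZMod r → ZMod ℓ) : Equiv.Perm (ZMod ℓ × ZMod r) where
  toFun p := (p.1 + u p.2, p.2 + 1)
  invFun p := (p.1 - u (p.2 - 1), p.2 - 1)
  left_inv p := by simp
  right_inv p := by simp

lemma rho_pow (k : ℕ) (p : ZMod ℓ × ZMod r) :
    (rho ℓ r ^ k) p = (p.1 + (k : ZMod ℓ), p.2) := by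
  induction k generalizing p with
  | zero => simp
  | succ k ih =>
    rw [pow_succ, Equiv.Perm.mul_apply, ih]
    have : (rho ℓ r) p = (p.1 + 1, p.2) := rfl
    rw [this]
    simp only [Prod.mk.injEq]
    constructor
    · push_cast; ring
    · trivial

lemma sigU_pow (u : ZMod r → ZMod ℓ) (k : ℕ) (p : ZMod ℓ × ZMod r) :
    (sigU u ^ k) p = (p.1 + ∑ s ∈ Finset.range k, u (p.2 + s), p.2 + (k : ZMod r)) := by
  induction k generalizing p with
  | zero => simp
  | succ k ih =>
    rw [pow_succ, Equiv.Perm.mul_apply, ih]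
    have h0 : (sigU u) p = (p.1 + u p.2, p.2 + 1) := rfl
    rw [h0]
    have hsum : ∑ s ∈ Finset.range (k+1), u (p.2 + s)
        = u (p.2 + 0) + ∑ s ∈ Finset.range k, u ((p.2 + 1) + s) := by
      rw [Finset.sum_range_succ', add_comm]
      congr 1
      · congr 1; push_cast; ring
      · refine Finset.sum_congr rfl fun s _ => ?_
        congr 1; push_cast; ring
    rw [hsum]
    simp only [Prod.mk.injEq]
    constructor
    · push_cast; ring
    · push_cast; ring

lemma sum_shift [NeZero r] {M : Type*} [AddCommMonoid M] (u : ZMod r → M) (i : ZMod r) :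
    ∑ s ∈ Finset.range r, u (i + (s : ZMod r)) = ∑ z : ZMod r, u z := by
  have h1 : ∑ z : ZMod r, u z = ∑ z : ZMod r, u (i + z) :=
    (Fintype.sum_equiv (Equiv.addLeft i) _ _ (fun z => rfl)).symm
  rw [h1]
  refine Finset.sum_nbij' (fun s => ((s : ℕ) : ZMod r)) (fun z => z.val) ?_ ?_ ?_ ?_ ?_
  · intro a _; exact Finset.mem_univ _
  · intro z _; exact Finset.mem_range.2 (ZMod.val_lt z)
  · intro a ha; exact ZMod.val_cast_of_lt (Finset.mem_range.1 ha)
  · intro z _; exact ZMod.natCast_rightInverse z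
  · intro a _; rfl

lemma sigU_pow_r [NeZero r] (u : ZMod r → ZMod ℓ) (hu : ∑ z : ZMod r, u z = 1) :
    sigU u ^ r = rho ℓ r := by
  ext p
  · rw [sigU_pow, sum_shift u p.2, hu]; rfl
  · rw [sigU_pow]
    show ((p.2 + (r : ZMod r)) : ZMod r) = p.2
    simp


lemma minimalPeriod_rho [NeZero ℓ] [NeZero r] (p : ZMod ℓ × ZMod r) :
    Function.minimalPeriod ⇑(rho ℓ r) p = ℓ := by
  have hper : ∀ k : ℕ, Function.IsPeriodicPt ⇑(rho ℓ r) k p ↔ (k : ZMod ℓ) = 0 := by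
    intro k
    rw [Function.IsPeriodicPt, Function.IsFixedPt, Equiv.Perm.iterate_eq_pow, rho_pow]
    constructor
    · intro h
      have := congrArg Prod.fst h
      simpa using this
    · intro h; rw [h]; simp
  have h1 : Function.IsPeriodicPt ⇑(rho ℓ r) ℓ p := (hper ℓ).2 (by simp)
  have h2 : Function.minimalPeriod ⇑(rho ℓ r) p ∣ ℓ := h1.minimalPeriod_dvd
  have h3 : ℓ ∣ Function.minimalPeriod ⇑(rho ℓ r) p := by
    rw [← ZMod.natCast_eq_zero_iff]
    exact (hper _).1 (Function.isPeriodicPt_minimalPeriod _ _)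
  exact Nat.dvd_antisymm h2 h3

lemma minimalPeriod_sigU [NeZero ℓ] [NeZero r] (u : ZMod r → ZMod ℓ)
    (hu : ∑ z : ZMod r, u z = 1) (p : ZMod ℓ × ZMod r) :
    ℓ * r ∣ Function.minimalPeriod ⇑(sigU u) p := by
  set P := Function.minimalPeriod ⇑(sigU u) p with hP
  have hper : Function.IsPeriodicPt ⇑(sigU u) P p := Function.isPeriodicPt_minimalPeriod _ _
  have hfix : (sigU u ^ P) p = p := by
    rw [← Equiv.Perm.iterate_eq_pow]; exact hper
  have hr : r ∣ P := by
    rw [← ZMod.natCast_eq_zero_iff]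
    have := congrArg Prod.snd hfix
    rw [sigU_pow] at this
    simpa using this
  obtain ⟨k, hk⟩ := hr
  have hfix2 : (rho ℓ r ^ k) p = p := by
    rw [← sigU_pow_r u hu, ← pow_mul, ← hk]; exact hfix
  have hl : ℓ ∣ k := by
    rw [← ZMod.natCast_eq_zero_iff]
    rw [rho_pow] at hfix2
    have := congrArg Prod.fst hfix2
    simpa using this
  obtain ⟨k', hk'⟩ := hl
  exact ⟨k', by rw [hk, hk']; ring⟩

lemma sigmaCongrRight_pow {ι : Type*} {β : ι → Type*} (F : ∀ i, Equiv.Perm (β i)) (k : ℕ)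
    (j : ι) (y : β j) :
    (Equiv.sigmaCongrRight F ^ k) ⟨j, y⟩ = ⟨j, (F j ^ k) y⟩ := by
  induction k generalizing y with
  | zero => simp
  | succ k ih =>
    rw [pow_succ, pow_succ, Equiv.Perm.mul_apply, Equiv.Perm.mul_apply]
    have h : (Equiv.sigmaCongrRight F) ⟨j, y⟩ = ⟨j, (F j) y⟩ := rfl
    rw [h, ih]

lemma minimalPeriod_sigmaCongrRight {ι : Type*} {β : ι → Type*} (F : ∀ i, Equiv.Perm (β i))
    (j : ι) (y : β j) :
    Function.minimalPeriod ⇑(Equiv.sigmaCongrRight F) ⟨j, y⟩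
      = Function.minimalPeriod ⇑(F j) y := by
  have key : ∀ k : ℕ, Function.IsPeriodicPt ⇑(Equiv.sigmaCongrRight F) k ⟨j, y⟩
      ↔ Function.IsPeriodicPt ⇑(F j) k y := by
    intro k
    rw [Function.IsPeriodicPt, Function.IsPeriodicPt, Function.IsFixedPt, Function.IsFixedPt,
      Equiv.Perm.iterate_eq_pow, Equiv.Perm.iterate_eq_pow, sigmaCongrRight_pow]
    constructor
    · intro h
      simpa using h
    · intro h; rw [h]
  exact Nat.dvd_antisymm
    (((key _).2 (Function.isPeriodicPt_minimalPeriod _ _)).minimalPeriod_dvd)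
    (((key _).1 (Function.isPeriodicPt_minimalPeriod _ _)).minimalPeriod_dvd)

lemma permCongr_apply_apply {α β : Type*} (e : α ≃ β) (p : Equiv.Perm α) (x : α) :
    (e.permCongr p) (e x) = e (p x) := by simp

lemma permCongr_pow {α β : Type*} (e : α ≃ β) (p : Equiv.Perm α) (k : ℕ) (x : α) :
    ((e.permCongr p) ^ k) (e x) = e ((p ^ k) x) := by
  induction k generalizing x with
  | zero => simp
  | succ k ih =>
    rw [pow_succ, pow_succ, Equiv.Perm.mul_apply, Equiv.Perm.mul_apply,
      permCongr_apply_apply, ih]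

lemma minimalPeriod_permCongr {α β : Type*} (e : α ≃ β) (p : Equiv.Perm α) (x : α) :
    Function.minimalPeriod ⇑(e.permCongr p) (e x) = Function.minimalPeriod ⇑p x := by
  have key : ∀ k : ℕ, Function.IsPeriodicPt ⇑(e.permCongr p) k (e x)
      ↔ Function.IsPeriodicPt ⇑p k x := by
    intro k
    rw [Function.IsPeriodicPt, Function.IsPeriodicPt, Function.IsFixedPt, Function.IsFixedPt,
      Equiv.Perm.iterate_eq_pow, Equiv.Perm.iterate_eq_pow, permCongr_pow]
    exact ⟨fun h => e.injective h, fun h => by rw [h]⟩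
  exact Nat.dvd_antisymm
    (((key _).2 (Function.isPeriodicPt_minimalPeriod _ _)).minimalPeriod_dvd)
    (((key _).1 (Function.isPeriodicPt_minimalPeriod _ _)).minimalPeriod_dvd)

lemma permCongr_mul {α β : Type*} (e : α ≃ β) (p q : Equiv.Perm α) :
    e.permCongr (p * q) = e.permCongr p * e.permCongr q := by
  ext x
  simp [Equiv.Perm.mul_apply]

lemma permCongr_pow_eq {α β : Type*} (e : α ≃ β) (p : Equiv.Perm α) (k : ℕ) :
    (e.permCongr p) ^ k = e.permCongr (p ^ k) := by
  induction k with
  | zero =>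
    ext x
    simp
  | succ k ih => rw [pow_succ, pow_succ, ih, permCongr_mul]


section Counting
variable {α : Type*} [Fintype α] [DecidableEq α]

lemma minimalPeriod_eq_card_support_cycleOf (σ : Equiv.Perm α) {x : α} (hx : σ x ≠ x) :
    Function.minimalPeriod ⇑σ x = (σ.cycleOf x).support.card := by
  have hc : (σ.cycleOf x).IsCycle := Equiv.Perm.isCycle_cycleOf σ hx
  have hx' : (σ.cycleOf x) x ≠ x := by rwa [Equiv.Perm.cycleOf_apply_self]
  have key : ∀ n : ℕ, Function.IsPeriodicPt ⇑σ n x ↔ orderOf (σ.cycleOf x) ∣ n := by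
    intro n
    rw [Function.IsPeriodicPt, Function.IsFixedPt, Equiv.Perm.iterate_eq_pow,
      orderOf_dvd_iff_pow_eq_one, hc.pow_eq_one_iff' hx',
      Equiv.Perm.cycleOf_pow_apply_self]
  rw [← hc.orderOf]
  exact Nat.dvd_antisymm
    (((key _).2 dvd_rfl).minimalPeriod_dvd)
    ((key _).1 (Function.isPeriodicPt_minimalPeriod _ _))

lemma minimalPeriod_eq_one_of_fixed (σ : Equiv.Perm α) {x : α} (hx : σ x = x) :
    Function.minimalPeriod ⇑σ x = 1 :=
  Function.minimalPeriod_eq_one_iff_isFixedPt.2 hx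

/-- Lemma B : points of minimal period `ℓv ≥ 2` are counted by `ℓv * (number of
`ℓv`-cycles)`. -/
lemma card_filter_minimalPeriod (σ : Equiv.Perm α) {ℓv : ℕ} (h2 : 2 ≤ ℓv) :
    (Finset.univ.filter fun x => Function.minimalPeriod ⇑σ x = ℓv).card
      = ℓv * σ.cycleType.count ℓv := by
  classical
  set C := σ.cycleFactorsFinset.filter (fun c => c.support.card = ℓv) with hC
  have hset : Finset.univ.filter (fun x => Function.minimalPeriod ⇑σ x = ℓv)
      = C.biUnion (fun c => c.support) := by
    ext x
    simp only [Finset.mem_filter, Finset.mem_univ, true_and, Finset.mem_biUnion, hC]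
    constructor
    · intro hmp
      have hx : σ x ≠ x := by
        intro h
        rw [minimalPeriod_eq_one_of_fixed σ h] at hmp
        omega
      refine ⟨σ.cycleOf x, ⟨?_, ?_⟩, ?_⟩
      · exact Equiv.Perm.cycleOf_mem_cycleFactorsFinset_iff.2 (Equiv.Perm.mem_support.2 hx)
      · rw [← minimalPeriod_eq_card_support_cycleOf σ hx, hmp]
      · exact Equiv.Perm.mem_support_cycleOf_iff.2
          ⟨Equiv.Perm.SameCycle.refl _ _, Equiv.Perm.mem_support.2 hx⟩
    · rintro ⟨c, ⟨hcf, hcard⟩, hxc⟩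
      have hcx : c = σ.cycleOf x := Equiv.Perm.cycle_is_cycleOf hxc hcf
      have hx : σ x ≠ x := by
        have hxs : x ∈ (σ.cycleOf x).support := hcx ▸ hxc
        have := Equiv.Perm.mem_support_cycleOf_iff.1 hxs
        exact Equiv.Perm.mem_support.1 this.2
      rw [minimalPeriod_eq_card_support_cycleOf σ hx, ← hcx, hcard]
  rw [hset, Finset.card_biUnion]
  · have h1 : ∀ c ∈ C, c.support.card = ℓv := fun c hc => (Finset.mem_filter.1 hc).2
    rw [Finset.sum_congr rfl h1, Finset.sum_const, smul_eq_mul]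
    have hcount : σ.cycleType.count ℓv = C.card := by
      rw [Equiv.Perm.cycleType_def, Multiset.count_map, hC, Finset.card_def, Finset.filter_val]
      congr 1
      apply Multiset.filter_congr
      intro c _
      simp [Function.comp_apply, eq_comm]
    rw [hcount, mul_comm]
  · intro c hc d hd hcd
    have h := σ.cycleFactorsFinset_pairwise_disjoint
      (Finset.mem_filter.1 hc).1 (Finset.mem_filter.1 hd).1 hcd
    exact Equiv.Perm.Disjoint.disjoint_support h


lemma exists_minimalPeriod_of_mem_cycleType (σ : Equiv.Perm α) {ℓv : ℕ}
    (h : ℓv ∈ σ.cycleType) : ∃ x, Function.minimalPeriod ⇑σ x = ℓv := by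
  have h2 := Equiv.Perm.two_le_of_mem_cycleType h
  have hco : 0 < σ.cycleType.count ℓv := Multiset.count_pos.2 h
  have hcard := card_filter_minimalPeriod σ h2
  have hpos : 0 < (Finset.univ.filter fun x => Function.minimalPeriod ⇑σ x = ℓv).card := by
    rw [hcard]; exact Nat.mul_pos (by omega) hco
  obtain ⟨x, hx⟩ := Finset.card_pos.1 hpos
  exact ⟨x, (Finset.mem_filter.1 hx).2⟩

lemma cycleType_eq_of_minimalPeriod_equiv {β : Type*} [Fintype β] [DecidableEq β]
    (σ : Equiv.Perm α) (π : Equiv.Perm β) (e : β ≃ α)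
    (h : ∀ y, Function.minimalPeriod ⇑σ (e y) = Function.minimalPeriod ⇑π y) :
    σ.cycleType = π.cycleType := by
  refine Multiset.ext.2 fun n => ?_
  by_cases h2 : 2 ≤ n
  · have hcard : (Finset.univ.filter fun y : β => Function.minimalPeriod ⇑π y = n).card
        = (Finset.univ.filter fun x : α => Function.minimalPeriod ⇑σ x = n).card := by
      apply Finset.card_bij (fun y _ => e y)
      · intro y hy
        rw [Finset.mem_filter] at hy ⊢
        exact ⟨Finset.mem_univ _, by rw [h y]; exact hy.2⟩
      · intro y _ y' _ hyy'
        exact e.injective hyy'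
      · intro x hx
        refine ⟨e.symm x, ?_, by simp⟩
        rw [Finset.mem_filter] at hx ⊢
        refine ⟨Finset.mem_univ _, ?_⟩
        rw [← h (e.symm x)]
        simpa using hx.2
    have := (card_filter_minimalPeriod σ h2).symm.trans
      (hcard.symm.trans (card_filter_minimalPeriod π h2))
    exact Nat.eq_of_mul_eq_mul_left (by omega) this
  · rw [Multiset.count_eq_zero_of_notMem, Multiset.count_eq_zero_of_notMem]
    · exact fun hm => h2 (Equiv.Perm.two_le_of_mem_cycleType hm)
    · exact fun hm => h2 (Equiv.Perm.two_le_of_mem_cycleType hm)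

end Counting

lemma multiset_sum_le_prod (s : Multiset ℕ) :
    (∀ x ∈ s, 2 ≤ x) → s ≠ 0 → s.sum ≤ s.prod ∧ 2 ≤ s.prod := by
  induction s using Multiset.induction with
  | empty => intro _ hs; exact absurd rfl hs
  | cons a t ih =>
    intro h2 _
    simp only [Multiset.sum_cons, Multiset.prod_cons]
    have ha : 2 ≤ a := h2 a (Multiset.mem_cons_self a t)
    by_cases ht : t = 0
    · subst ht
      simp only [Multiset.sum_zero, Multiset.prod_zero, add_zero, mul_one]
      exact ⟨le_rfl, ha⟩
    · obtain ⟨h1, hp⟩ := ih (fun x hx => h2 x (Multiset.mem_cons_of_mem hx)) ht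
      constructor
      · calc a + t.sum ≤ a + t.prod := by omega
          _ ≤ a * t.prod := Nat.add_le_mul ha hp
      · calc 2 ≤ a := ha
          _ ≤ a * t.prod := Nat.le_mul_of_pos_right a (by omega)

lemma multiset_nsmul_sum (k : ℕ) (t : Multiset ℕ) : (k • t).sum = k * t.sum := by
  induction k with
  | zero => simp
  | succ k ih => rw [succ_nsmul, Multiset.sum_add, ih]; ring

lemma sum_split {r : ℕ} [NeZero r] {A : Type*} [AddCommMonoid A] (f : ZMod r → A) :
    ∑ z : ZMod r, f z = f 0 + ∑ w : {z : ZMod r // z ≠ 0}, f w.1 := by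
  rw [← Finset.add_sum_erase _ f (Finset.mem_univ (0 : ZMod r))]
  congr 1
  rw [Finset.sum_subtype]
  intro x
  simp [Finset.mem_erase]

def sumOneEquiv (ℓ r : ℕ) [NeZero r] :
    {u : ZMod r → ZMod ℓ // ∑ z : ZMod r, u z = 1} ≃ ({z : ZMod r // z ≠ 0} → ZMod ℓ) where
  toFun u z := u.1 z.1
  invFun v := ⟨fun z => if h : z = 0 then 1 - ∑ w : {z : ZMod r // z ≠ 0}, v w else v ⟨z, h⟩, by
    rw [sum_split]
    rw [dif_pos rfl]
    have h2 : ∀ w : {z : ZMod r // z ≠ 0},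
        (if h : (w : ZMod r) = 0 then 1 - ∑ w : {z : ZMod r // z ≠ 0}, v w else v ⟨w.1, h⟩) = v w := by
      intro w
      rw [dif_neg w.2]
    rw [Finset.sum_congr rfl fun w _ => h2 w]
    abel⟩
  left_inv u := by
    apply Subtype.ext
    funext z
    by_cases hz : z = 0
    · subst hz
      simp only [dif_pos]
      have := u.2
      rw [sum_split] at this
      linear_combination -this
    · simp only [dif_neg hz]
  right_inv v := by
    funext w
    simp only [dif_neg w.2]

lemma card_sumOne (ℓ r : ℕ) [NeZero ℓ] [NeZero r] :
    Fintype.card {u : ZMod r → ZMod ℓ // ∑ z : ZMod r, u z = 1} = ℓ ^ (r - 1) := by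
  rw [Fintype.card_congr (sumOneEquiv ℓ r), Fintype.card_fun]
  congr 1
  · exact ZMod.card ℓ
  · have h1 : Fintype.card {z : ZMod r // z ≠ 0}
        = Fintype.card (ZMod r) - Fintype.card {z : ZMod r // z = 0} :=
      Fintype.card_subtype_compl _
    rw [h1, Fintype.card_subtype_eq, ZMod.card]


lemma sigU_param_inj {ℓ r : ℕ} {u u' : ZMod r → ZMod ℓ} (h : sigU u = sigU u') : u = u' := by
  funext i
  have := congrArg (fun e : Equiv.Perm (ZMod ℓ × ZMod r) => (e ((0 : ZMod ℓ), i)).1) h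
  simpa [sigU] using this

lemma sigmaCongrRight_param_inj {ι : Type*} {β : ι → Type*}
    {F G : ∀ i, Equiv.Perm (β i)}
    (h : Equiv.sigmaCongrRight F = Equiv.sigmaCongrRight G) (j : ι) : F j = G j := by
  ext y
  have h2 : (⟨j, F j y⟩ : Σ i, β i) = ⟨j, G j y⟩ :=
    congrArg (fun e : Equiv.Perm (Σ i, β i) => e ⟨j, y⟩) h
  simpa using h2

/-- The main construction: any `τ ∈ Cyc_{q,r}(n)` has at least `nq^(r-1)` "interleaved"
`r`-th roots all of whose cycle lengths are divisible by `q * r`. -/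
lemma main_exists {n nq q r : ℕ} (hq : 2 ≤ q) (hr : 2 ≤ r) (hn : n = r * nq)
    (τ : Equiv.Perm (Fin n)) (hτ : CycQR q r τ) :
    ∃ f : Fin (nq ^ (r - 1)) → Equiv.Perm (Fin n),
      Function.Injective f ∧
        ∀ k, (∀ x, q * r ∣ Function.minimalPeriod ⇑(f k) x) ∧ (f k) ^ r = τ := by
  classical
  haveI : NeZero r := ⟨by omega⟩
  obtain ⟨hq_dvd, hcount⟩ := hτ
  have hfix : ∀ x, τ x ≠ x := by
    intro x hx
    have h1 := hq_dvd x
    rw [minimalPeriod_eq_one_of_fixed τ hx] at h1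
    exact absurd (Nat.le_of_dvd one_pos h1) (by omega)
  have hsum : τ.cycleType.sum = n := by
    rw [Equiv.Perm.sum_cycleType]
    have hu : τ.support = Finset.univ :=
      Finset.eq_univ_iff_forall.2 fun x => Equiv.Perm.mem_support.2 (hfix x)
    rw [hu, Finset.card_univ, Fintype.card_fin]
  obtain ⟨s', hs'⟩ := τ.cycleType.exists_smul_of_dvd_count (fun a _ => hcount a)
  have hs'mem : ∀ a ∈ s', a ∈ τ.cycleType := by
    intro a ha
    rw [hs', Multiset.mem_nsmul]
    exact ⟨by omega, ha⟩
  have hs'prop : ∀ a ∈ s', 2 ≤ a ∧ q ∣ a := by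
    intro a ha
    have hmem := hs'mem a ha
    refine ⟨Equiv.Perm.two_le_of_mem_cycleType hmem, ?_⟩
    obtain ⟨x, hx⟩ := exists_minimalPeriod_of_mem_cycleType τ hmem
    rw [← hx]
    exact hq_dvd x
  have hnq : s'.sum = nq := by
    rw [hs', multiset_nsmul_sum] at hsum
    have : r * nq = r * s'.sum := by omega
    exact (Nat.eq_of_mul_eq_mul_left (by omega) this).symm
  -- enumerate s' as a list
  set lst := s'.toList with hlstdef
  have hlst : (lst : Multiset ℕ) = s' := s'.coe_toList
  set L := lst.length with hLdef
  set ℓ : Fin L → ℕ := fun j => lst.get j with hldef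
  have hmem2 : ∀ j, ℓ j ∈ s' := by
    intro j
    rw [← hlst]
    exact List.get_mem lst j
  have hl2 : ∀ j, 2 ≤ ℓ j := fun j => (hs'prop _ (hmem2 j)).1
  have hlq : ∀ j, q ∣ ℓ j := fun j => (hs'prop _ (hmem2 j)).2
  haveI hNZ : ∀ j, NeZero (ℓ j) := fun j => ⟨by have := hl2 j; omega⟩
  have hsum2 : ∑ j : Fin L, ℓ j = nq := by
    rw [← hnq, ← hlst]
    have : ∑ j : Fin L, ℓ j = lst.sum := by
      rw [hldef]
      simp only [List.get_eq_getElem]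
      exact Fin.sum_univ_getElem lst
    rw [this, Multiset.sum_coe]
  have hprod2 : ∏ j : Fin L, ℓ j = s'.prod := by
    rw [← hlst]
    have : ∏ j : Fin L, ℓ j = lst.prod := by
      rw [hldef]
      simp only [List.get_eq_getElem]
      exact Fin.prod_univ_getElem lst
    rw [this, Multiset.prod_coe]
  -- the model
  have hcardMT : Fintype.card (Σ j : Fin L, ZMod (ℓ j) × ZMod r) = n := by
    rw [Fintype.card_sigma]
    have h1 : ∀ j : Fin L, Fintype.card (ZMod (ℓ j) × ZMod r) = ℓ j * r := by
      intro j
      rw [Fintype.card_prod, ZMod.card, ZMod.card]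
    rw [Finset.sum_congr rfl fun j _ => h1 j, ← Finset.sum_mul, hsum2, hn, mul_comm]
  obtain e₀ : (Σ j : Fin L, ZMod (ℓ j) × ZMod r) ≃ Fin n := Fintype.equivFinOfCardEq hcardMT
  set τM : Equiv.Perm (Σ j : Fin L, ZMod (ℓ j) × ZMod r) :=
    Equiv.sigmaCongrRight (fun j => rho (ℓ j) r) with hτM
  have hmpM : ∀ (j : Fin L) (y : ZMod (ℓ j) × ZMod r),
      Function.minimalPeriod ⇑τM ⟨j, y⟩ = ℓ j := by
    intro j y
    rw [hτM, minimalPeriod_sigmaCongrRight, minimalPeriod_rho]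
  -- cycle type of the model equals that of τ
  have hctM : (e₀.permCongr τM).cycleType = τ.cycleType := by
    have h1 : (e₀.permCongr τM).cycleType = τM.cycleType :=
      cycleType_eq_of_minimalPeriod_equiv _ _ e₀ (fun y => minimalPeriod_permCongr e₀ τM y)
    rw [h1]
    refine Multiset.ext.2 fun c => ?_
    by_cases h2 : 2 ≤ c
    · have hB := card_filter_minimalPeriod τM h2
      have hfilter : (Finset.univ.filter fun z : (Σ j : Fin L, ZMod (ℓ j) × ZMod r) =>
          Function.minimalPeriod ⇑τM z = c)
          = (Finset.univ.filter fun z : (Σ j : Fin L, ZMod (ℓ j) × ZMod r) => ℓ z.1 = c) := by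
        apply Finset.filter_congr
        rintro ⟨j, y⟩ _
        rw [hmpM j y]
      have hcount2 : (Finset.univ.filter fun z : (Σ j : Fin L, ZMod (ℓ j) × ZMod r) =>
          ℓ z.1 = c).card = (c * r) * (Finset.univ.filter fun j : Fin L => ℓ j = c).card := by
        rw [Finset.card_filter, ← Finset.univ_sigma_univ, Finset.sum_sigma]
        have hin : ∀ j : Fin L, (∑ y : ZMod (ℓ j) × ZMod r,
            if ℓ (⟨j, y⟩ : Σ j : Fin L, ZMod (ℓ j) × ZMod r).1 = c then 1 else 0)
            = if ℓ j = c then c * r else 0 := by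
          intro j
          by_cases hj : ℓ j = c
          · simp only [hj, if_true]
            rw [Finset.sum_const, Finset.card_univ, Fintype.card_prod, ZMod.card, ZMod.card,
              smul_eq_mul, mul_one, hj]
          · simp [hj]
        rw [Finset.sum_congr rfl fun j _ => hin j, ← Finset.sum_filter, Finset.sum_const,
          smul_eq_mul, mul_comm]
      have hcount3 : (Finset.univ.filter fun j : Fin L => ℓ j = c).card
          = Multiset.count c s' := by
        have hmap : Finset.univ.val.map ℓ = (lst : Multiset ℕ) := by
          rw [Fin.univ_val_map, hldef]
          exact congrArg _ (List.ofFn_get lst)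
        have h4 : Multiset.count c (Finset.univ.val.map ℓ)
            = (Finset.univ.filter fun j : Fin L => ℓ j = c).card := by
          rw [Multiset.count_map, Finset.card_def, Finset.filter_val]
          congr 1
          apply Multiset.filter_congr
          intro j _
          exact eq_comm
        rw [← h4, hmap, hlst]
      have hrhs : Multiset.count c τ.cycleType = r * Multiset.count c s' := by
        rw [hs', Multiset.count_nsmul]
      have : c * Multiset.count c τM.cycleType = c * Multiset.count c τ.cycleType := by
        rw [← hB, hfilter, hcount2, hcount3, hrhs]
        ring
      exact Nat.eq_of_mul_eq_mul_left (by omega) this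
    · rw [Multiset.count_eq_zero_of_notMem, Multiset.count_eq_zero_of_notMem]
      · exact fun hm => h2 (Equiv.Perm.two_le_of_mem_cycleType hm)
      · exact fun hm => h2 (Equiv.Perm.two_le_of_mem_cycleType hm)
  -- conjugate the model onto τ
  obtain ⟨g, hg⟩ := isConj_iff.1 (Equiv.Perm.isConj_iff_cycleType_eq.2 hctM)
  set E : (Σ j : Fin L, ZMod (ℓ j) × ZMod r) ≃ Fin n := e₀.trans g with hE
  have hEτ : E.permCongr τM = τ := by
    rw [← hg]
    ext x
    simp [hE, Equiv.permCongr_apply, Equiv.Perm.mul_apply, Equiv.Perm.inv_def]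
  -- the parameter space
  have hcardP : Fintype.card (∀ j : Fin L, {u : ZMod r → ZMod (ℓ j) //
      ∑ z : ZMod r, u z = 1}) = (∏ j : Fin L, ℓ j) ^ (r - 1) := by
    rw [Fintype.card_pi, ← Finset.prod_pow]
    exact Finset.prod_congr rfl fun j _ => card_sumOne (ℓ j) r
  have hle : nq ^ (r - 1) ≤ Fintype.card (∀ j : Fin L, {u : ZMod r → ZMod (ℓ j) //
      ∑ z : ZMod r, u z = 1}) := by
    rw [hcardP]
    apply Nat.pow_le_pow_left
    rw [hprod2, ← hnq]
    by_cases hz : s' = 0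
    · simp [hz]
    · exact (multiset_sum_le_prod s' (fun x hx => (hs'prop x hx).1) hz).1
  obtain ⟨emb⟩ : Nonempty (Fin (nq ^ (r - 1)) ↪ (∀ j : Fin L, {u : ZMod r → ZMod (ℓ j) //
      ∑ z : ZMod r, u z = 1})) :=
    Function.Embedding.nonempty_of_card_le (by rw [Fintype.card_fin]; exact hle)
  refine ⟨fun k => E.permCongr (Equiv.sigmaCongrRight fun j => sigU ((emb k) j).1), ?_, ?_⟩
  · intro k k' hkk'
    apply emb.injective
    funext j
    apply Subtype.ext
    have h1 := (Equiv.injective E.permCongr) hkk'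
    exact sigU_param_inj (sigmaCongrRight_param_inj h1 j)
  · intro k
    constructor
    · intro x
      have hx : x = E (E.symm x) := (E.apply_symm_apply x).symm
      rw [hx, minimalPeriod_permCongr]
      obtain ⟨j, y⟩ := E.symm x
      rw [minimalPeriod_sigmaCongrRight]
      exact dvd_trans (mul_dvd_mul_right (hlq j) r)
        (minimalPeriod_sigU ((emb k) j).1 ((emb k) j).2 y)
    · rw [permCongr_pow_eq, ← hEτ]
      congr 1
      apply Equiv.ext
      rintro ⟨j, y⟩
      rw [← Equiv.Perm.iterate_eq_pow]
      rw [show ((Equiv.sigmaCongrRight fun j => sigU ((emb k) j).1) : Equiv.Perm _)^[r]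
        = ⇑((Equiv.sigmaCongrRight fun j => sigU ((emb k) j).1) ^ r) from
          Equiv.Perm.iterate_eq_pow _ r]
      rw [sigmaCongrRight_pow, sigU_pow_r _ ((emb k) j).2]
      rfl

end Stmt15

/-- for `q ≥ 2`, `r = q^l`, `l ≥ 1`, `m ≥ 1`:
`|Cyc_{qr}(mqr)| ≥ (mq)^{r-1} · |Cyc_{q,r}(mqr)|`. -/
theorem stmt15 (q l r m : ℕ) (hq : 2 ≤ q) (hl : 1 ≤ l) (hr : r = q ^ l) (hm : 1 ≤ m) :
    Nat.card {σ : Equiv.Perm (Fin (m * q * r)) //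
        ∀ x, (q * r) ∣ Function.minimalPeriod ⇑σ x} ≥
      (m * q) ^ (r - 1) *
        Nat.card {σ : Equiv.Perm (Fin (m * q * r)) // CycQR q r σ} := by
  classical
  have hr2 : 2 ≤ r := by
    rw [hr]
    calc 2 ≤ q := hq
      _ ≤ q ^ l := Nat.le_self_pow (by omega) q
  have hn : m * q * r = r * (m * q) := by ring
  choose f hfinj hfprop using
    fun τ : {σ : Equiv.Perm (Fin (m * q * r)) // CycQR q r σ} =>
      Stmt15.main_exists hq hr2 hn τ.1 τ.2
  set F : {σ : Equiv.Perm (Fin (m * q * r)) // CycQR q r σ} × Fin ((m * q) ^ (r - 1)) →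
      {σ : Equiv.Perm (Fin (m * q * r)) // ∀ x, (q * r) ∣ Function.minimalPeriod ⇑σ x} :=
    fun p => ⟨f p.1 p.2, (hfprop p.1 p.2).1⟩ with hF
  have hinj : Function.Injective F := by
    rintro ⟨τ, k⟩ ⟨τ', k'⟩ h
    have hv : f τ k = f τ' k' := congrArg Subtype.val h
    have hτ : τ = τ' := Subtype.ext (by rw [← (hfprop τ k).2, ← (hfprop τ' k').2, hv])
    subst hτ
    have hk : k = k' := hfinj τ hv
    rw [hk]
  have hcard := Nat.card_le_card_of_injective F hinj
  rw [Nat.card_prod] at hcard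
  have hfin : Nat.card (Fin ((m * q) ^ (r - 1))) = (m * q) ^ (r - 1) := by
    simp [Nat.card_eq_fintype_card]
  rw [hfin] at hcard
  rw [ge_iff_le, mul_comm]
  exact hcard
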